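/- Let (G, v, d) be a cLD election whose delegation graph is an upwards-directed tree with root x, and suppose v(i) ≥ d(i) for every non-root vertex i. Then the solution where x is the sole casting voter and each other vertex delegates along its unique outgoing edge is feasible, and it is cost-minimizing: its cost v(x) + ∑_{i≠x} d(i) is at most the cost of any feasible solution. -/
import Mathlib


/-- One delegation step: `a` delegates along its selected edge to `b`. -/
def dStep {α : Type} (Dn : α → Option α) (a b : α) : Prop := Dn a = some b

/-- A feasible solution `(Cs, Dn)` of a cLD election with delegation graph `E`:
`Dn` selects exactly one outgoing edge (an edge of `E`) for each vertex not in
`Cs` and none for vertices of `Cs`, and every vertex outside `Cs` has a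
directed path through selected edges to a vertex of `Cs`. -/
def FeasibleSol {α : Type} [DecidableEq α] (E : α → α → Prop) (Cs : Finset α)
    (Dn : α → Option α) : Prop :=
  (∀ i, Dn i = none ↔ i ∈ Cs) ∧ (∀ i j, Dn i = some j → E i j) ∧
  (∀ i, i ∉ Cs → ∃ j ∈ Cs, Relation.ReflTransGen (dStep Dn) i j)

/-- Total cost of a solution with casting voters `Cs`: voting costs for members
of `Cs` plus delegating costs for everyone else. -/
def elCost {α : Type} [Fintype α] [DecidableEq α] (v d : α → ℕ) (Cs : Finset α) : ℕ :=
  ∑ i ∈ Cs, v i + ∑ i ∈ Csᶜ, d i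

/-- Voting power of a casting voter `j`: the number of voters whose delegation
path leads to `j` (including `j` itself). -/
noncomputable def votingPower {α : Type} (Dn : α → Option α) (j : α) : ℕ :=
  Set.ncard {i | Relation.ReflTransGen (dStep Dn) i j}

/-- Let the delegation graph be an upwards-directed tree with root `x`
(encoded by `next : α → Option α` with `next x = none` and every vertex having
a directed path to `x`), and suppose `v i ≥ d i` for every non-root vertex.
Then the solution in which `x` is the sole casting voter and every other
vertex delegates along its unique outgoing edge is feasible, and it is
cost-minimizing: its cost `v x + ∑_{i ≠ x} d i` is at most the cost of any
feasible solution. -/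
theorem tree_root_solution_optimal {α : Type} [Fintype α] [DecidableEq α]
    (next : α → Option α) (v d : α → ℕ) (x : α)
    (hroot : next x = none)
    (hreach : ∀ y : α, Relation.ReflTransGen (dStep next) y x)
    (hvd : ∀ i : α, i ≠ x → d i ≤ v i) :
    FeasibleSol (dStep next) {x} next ∧
    (∀ (Cs : Finset α) (Dn : α → Option α), FeasibleSol (dStep next) Cs Dn →
      v x + ∑ i ∈ ({x}ᶜ : Finset α), d i ≤ elCost v d Cs) := by
  constructor
  · refine ⟨?_, fun i j h => h, ?_⟩
    · intro i
      simp only [Finset.mem_singleton]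
      constructor
      · intro h
        rcases (hreach i).cases_head with h' | ⟨j, hj, _⟩
        · exact h'
        · rw [dStep, h] at hj; cases hj
      · rintro rfl; exact hroot
    · intro i _
      exact ⟨x, Finset.mem_singleton_self x, hreach i⟩
  · rintro Cs Dn ⟨h1, h2, h3⟩
    have hx : x ∈ Cs := by
      by_contra hx
      have : Dn x ≠ none := fun h => hx ((h1 x).mp h)
      obtain ⟨j, hj⟩ := Option.ne_none_iff_exists'.mp this
      have := h2 x j hj
      rw [dStep, hroot] at this; cases this
    have hsplit : ({x}ᶜ : Finset α) = (Cs.erase x) ∪ Csᶜ := by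
      ext i
      simp only [Finset.mem_compl, Finset.mem_singleton, Finset.mem_union,
        Finset.mem_erase]
      constructor
      · intro h
        by_cases hc : i ∈ Cs
        · exact Or.inl ⟨h, hc⟩
        · exact Or.inr hc
      · rintro (⟨h, _⟩ | h)
        · exact h
        · rintro rfl; exact h hx
    have hdisj : Disjoint (Cs.erase x) Csᶜ := by
      refine Finset.disjoint_left.mpr ?_
      intro a ha hca
      exact (Finset.mem_compl.mp hca) (Finset.mem_of_mem_erase ha)
    rw [hsplit, Finset.sum_union hdisj, elCost, ← Finset.add_sum_erase Cs v hx]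
    have hle : ∑ i ∈ Cs.erase x, d i ≤ ∑ i ∈ Cs.erase x, v i :=
      Finset.sum_le_sum fun i hi => hvd i (Finset.ne_of_mem_erase hi)
    omega
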